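/- If there exists z ∈ ker B with f(z) ≠ 0 (the bending dominated case), then the ratio of the membrane/shear energy to the bending energy tends to zero: lim_{ε→0⁺} ⟨B u^ε, B u^ε⟩_V / (ε² ⟨A u^ε, A u^ε⟩_U) = 0. -/

import Mathlib

open RealInnerProductSpace Filter Topology Set

/-- If there exists z ∈ ker B with f(z) ≠ 0 (the bending dominated case), then the ratio
of the membrane/shear energy to the bending energy tends to zero:
lim_{ε→0⁺} ⟨B u^ε, B u^ε⟩_V / (ε² ⟨A u^ε, A u^ε⟩_U) = 0. -/
theorem stmt_6
    {H U V : Type*}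
    [NormedAddCommGroup H] [InnerProductSpace ℝ H] [CompleteSpace H]
    [NormedAddCommGroup U] [InnerProductSpace ℝ U] [CompleteSpace U]
    [NormedAddCommGroup V] [InnerProductSpace ℝ V] [CompleteSpace V]
    (A : H →L[ℝ] U) (B : H →L[ℝ] V)
    (c₁ c₂ : ℝ) (hc₁ : 0 < c₁) (hc₂ : 0 < c₂)
    (hlow : ∀ v : H, c₁ * ‖v‖ ≤ ‖A v‖ + ‖B v‖)
    (hup : ∀ v : H, ‖A v‖ + ‖B v‖ ≤ c₂ * ‖v‖)
    (f : H →L[ℝ] ℝ)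
    (u : ℝ → H)
    (hu : ∀ ε : ℝ, 0 < ε → ∀ v : H,
      ⟪A (u ε), A v⟫ + (ε ^ 2)⁻¹ * ⟪B (u ε), B v⟫ = f v)
    (hbend : ∃ z : H, B z = 0 ∧ f z ≠ 0) :
    Tendsto (fun ε : ℝ => ⟪B (u ε), B (u ε)⟫ / (ε ^ 2 * ⟪A (u ε), A (u ε)⟫))
      (𝓝[>] 0) (𝓝 0) := by
  obtain ⟨z, hBz, hfz⟩ := hbend
  -- the energy functional and the minimal energy
  set J : ℝ → H → ℝ :=
    fun ε v => (⟪A v, A v⟫ + (ε ^ 2)⁻¹ * ⟪B v, B v⟫) / 2 - f v with hJdef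
  set M : ℝ → ℝ := fun ε => J ε (u ε) with hMdef
  -- u ε minimizes J ε
  have hmin : ∀ ε : ℝ, 0 < ε → ∀ v : H, J ε (u ε) ≤ J ε v := by
    intro ε hε v
    have h := hu ε hε (v - u ε)
    have hεinv : (0:ℝ) < (ε ^ 2)⁻¹ := by positivity
    have h1 : (0:ℝ) ≤ ⟪A (v - u ε), A (v - u ε)⟫ := real_inner_self_nonneg
    have h2 : (0:ℝ) ≤ ⟪B (v - u ε), B (v - u ε)⟫ := real_inner_self_nonneg
    have hA : ⟪A (v - u ε), A (v - u ε)⟫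
        = ⟪A v, A v⟫ - 2 * ⟪A (u ε), A v⟫ + ⟪A (u ε), A (u ε)⟫ := by
      simp only [map_sub, inner_sub_left, inner_sub_right, real_inner_comm (A v) (A (u ε))]
      ring
    have hB : ⟪B (v - u ε), B (v - u ε)⟫
        = ⟪B v, B v⟫ - 2 * ⟪B (u ε), B v⟫ + ⟪B (u ε), B (u ε)⟫ := by
      simp only [map_sub, inner_sub_left, inner_sub_right, real_inner_comm (B v) (B (u ε))]
      ring
    have hfsub : f (v - u ε) = f v - f (u ε) := by simp
    have hAr : ⟪A (u ε), A (v - u ε)⟫ = ⟪A (u ε), A v⟫ - ⟪A (u ε), A (u ε)⟫ := by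
      simp [map_sub, inner_sub_right]
    have hBr : ⟪B (u ε), B (v - u ε)⟫ = ⟪B (u ε), B v⟫ - ⟪B (u ε), B (u ε)⟫ := by
      simp [map_sub, inner_sub_right]
    rw [hAr, hBr, hfsub] at h
    simp only [hJdef]
    nlinarith [mul_nonneg hεinv.le h2]
  -- M is antitone on (0, ∞)
  have hanti : AntitoneOn M (Ioi (0:ℝ)) := by
    intro δ hδ ε hε hle
    have hδ' : (0:ℝ) < δ := hδ
    have hε' : (0:ℝ) < ε := hε
    have h1 : M ε ≤ J ε (u δ) := hmin ε hε' (u δ)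
    have h2 : J ε (u δ) ≤ J δ (u δ) := by
      have hinv : (ε ^ 2)⁻¹ ≤ (δ ^ 2)⁻¹ := by
        apply inv_anti₀ (by positivity)
        exact pow_le_pow_left₀ hδ'.le hle 2
      have h2' : (0:ℝ) ≤ ⟪B (u δ), B (u δ)⟫ := real_inner_self_nonneg
      simp only [hJdef]
      have := mul_le_mul_of_nonneg_right hinv h2'
      linarith
    exact h1.trans h2
  -- M is bounded above
  have hub : BddAbove (M '' Ioi (0:ℝ)) := by
    refine ⟨⟪A z, A z⟫ / 2 - f z, ?_⟩
    rintro x ⟨ε, hε, rfl⟩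
    have := hmin ε hε z
    simp only [hJdef, hBz, inner_zero_left, mul_zero, add_zero] at this ⊢
    exact this
  -- M has a limit L as ε → 0⁺
  set L := sSup (M '' Ioi (0:ℝ)) with hL
  have hMlim : Tendsto M (𝓝[>] (0:ℝ)) (𝓝 L) :=
    hanti.tendsto_nhdsGT hub
  -- the map δ ↦ √2 δ tends to 0⁺ within (0,∞)
  have hs2 : (0:ℝ) < Real.sqrt 2 := by positivity
  have hcomp : Tendsto (fun δ : ℝ => Real.sqrt 2 * δ) (𝓝[>] (0:ℝ)) (𝓝[>] (0:ℝ)) := by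
    apply tendsto_nhdsWithin_of_tendsto_nhds_of_eventually_within
    · have : Tendsto (fun δ : ℝ => Real.sqrt 2 * δ) (𝓝 (0:ℝ)) (𝓝 (Real.sqrt 2 * 0)) :=
        (tendsto_id.const_mul _)
      rw [mul_zero] at this
      exact this.mono_left nhdsWithin_le_nhds
    · filter_upwards [self_mem_nhdsWithin] with δ (hδ : (0:ℝ) < δ)
      exact mul_pos hs2 hδ
  have hdiff : Tendsto (fun δ : ℝ => 4 * (M δ - M (Real.sqrt 2 * δ)))
      (𝓝[>] (0:ℝ)) (𝓝 0) := by
    have : Tendsto (fun δ : ℝ => M δ - M (Real.sqrt 2 * δ)) (𝓝[>] (0:ℝ)) (𝓝 (L - L)) :=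
      hMlim.sub (hMlim.comp hcomp)
    rw [sub_self] at this
    have h4 := this.const_mul (4:ℝ)
    rw [mul_zero] at h4
    exact h4
  -- the key inequality : (δ²)⁻¹ ⟪B u δ, B u δ⟫ ≤ 4 (M δ - M (√2 δ))
  have hkey : ∀ δ : ℝ, 0 < δ →
      (δ ^ 2)⁻¹ * ⟪B (u δ), B (u δ)⟫ ≤ 4 * (M δ - M (Real.sqrt 2 * δ)) := by
    intro δ hδ
    have hsd : (0:ℝ) < Real.sqrt 2 * δ := mul_pos hs2 hδ
    have h1 : M (Real.sqrt 2 * δ) ≤ J (Real.sqrt 2 * δ) (u δ) :=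
      hmin _ hsd (u δ)
    have hsq : (Real.sqrt 2 * δ) ^ 2 = 2 * δ ^ 2 := by
      rw [mul_pow, Real.sq_sqrt (by norm_num : (0:ℝ) ≤ 2)]
    have h2 : J (Real.sqrt 2 * δ) (u δ)
        = M δ - ((δ ^ 2)⁻¹ * ⟪B (u δ), B (u δ)⟫) / 4 := by
      simp only [hJdef, hMdef, hsq]
      have hδ2 : (δ ^ 2 : ℝ) ≠ 0 := by positivity
      field_simp
      ring
    rw [h2] at h1
    linarith
  -- the quantity r δ = (δ²)⁻¹ ⟪B u δ, B u δ⟫ tends to 0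
  have hr : Tendsto (fun δ : ℝ => (δ ^ 2)⁻¹ * ⟪B (u δ), B (u δ)⟫)
      (𝓝[>] (0:ℝ)) (𝓝 0) := by
    refine tendsto_of_tendsto_of_tendsto_of_le_of_le' tendsto_const_nhds hdiff ?_ ?_
    · filter_upwards [self_mem_nhdsWithin] with δ (hδ : (0:ℝ) < δ)
      have : (0:ℝ) ≤ ⟪B (u δ), B (u δ)⟫ := real_inner_self_nonneg
      positivity
    · filter_upwards [self_mem_nhdsWithin] with δ (hδ : (0:ℝ) < δ)
      exact hkey δ hδ
  -- lower bound on ⟪A u ε, A u ε⟫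
  have hAz : A z ≠ 0 := by
    intro h0
    have := hu 1 one_pos z
    simp [hBz, h0] at this
    exact hfz this.symm
  set m2 : ℝ := (f z) ^ 2 / ‖A z‖ ^ 2 with hm2def
  have hm2 : 0 < m2 := by
    have : (0:ℝ) < ‖A z‖ := norm_pos_iff.mpr hAz
    have hf2 : (0:ℝ) < (f z) ^ 2 := by positivity
    positivity
  have hlowA : ∀ ε : ℝ, 0 < ε → m2 ≤ ⟪A (u ε), A (u ε)⟫ := by
    intro ε hε
    have h := hu ε hε z
    rw [hBz] at h
    simp only [inner_zero_right, mul_zero, add_zero] at h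
    have hcs : |⟪A (u ε), A z⟫| ≤ ‖A (u ε)‖ * ‖A z‖ := abs_real_inner_le_norm _ _
    rw [h] at hcs
    have hAzpos : (0:ℝ) < ‖A z‖ := norm_pos_iff.mpr hAz
    have h1 : |f z| / ‖A z‖ ≤ ‖A (u ε)‖ := by
      rw [div_le_iff₀ hAzpos]; exact hcs
    have h2 : (|f z| / ‖A z‖) ^ 2 ≤ ‖A (u ε)‖ ^ 2 := by
      apply pow_le_pow_left₀ (by positivity) h1
    have h3 : (|f z| / ‖A z‖) ^ 2 = m2 := by
      rw [hm2def, div_pow, sq_abs]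
    rw [h3] at h2
    rwa [real_inner_self_eq_norm_sq]
  -- conclude by squeezing
  have hfinal : Tendsto (fun δ : ℝ => ((δ ^ 2)⁻¹ * ⟪B (u δ), B (u δ)⟫) / m2)
      (𝓝[>] (0:ℝ)) (𝓝 0) := by
    have := hr.div_const m2
    rwa [zero_div] at this
  refine tendsto_of_tendsto_of_tendsto_of_le_of_le' tendsto_const_nhds hfinal ?_ ?_
  · filter_upwards [self_mem_nhdsWithin] with ε (hε : (0:ℝ) < ε)
    have hA := hlowA ε hε
    have hB : (0:ℝ) ≤ ⟪B (u ε), B (u ε)⟫ := real_inner_self_nonneg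
    have hden : (0:ℝ) < ε ^ 2 * ⟪A (u ε), A (u ε)⟫ := by
      have : (0:ℝ) < ⟪A (u ε), A (u ε)⟫ := lt_of_lt_of_le hm2 hA
      positivity
    positivity
  · filter_upwards [self_mem_nhdsWithin] with ε (hε : (0:ℝ) < ε)
    have hA := hlowA ε hε
    have hB : (0:ℝ) ≤ ⟪B (u ε), B (u ε)⟫ := real_inner_self_nonneg
    have hApos : (0:ℝ) < ⟪A (u ε), A (u ε)⟫ := lt_of_lt_of_le hm2 hA
    have hε2 : (0:ℝ) < ε ^ 2 := by positivity
    rw [div_le_div_iff₀ (by positivity) hm2]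
    calc ⟪B (u ε), B (u ε)⟫ * m2 ≤ ⟪B (u ε), B (u ε)⟫ * ⟪A (u ε), A (u ε)⟫ :=
          mul_le_mul_of_nonneg_left hA hB
      _ = (ε ^ 2)⁻¹ * ⟪B (u ε), B (u ε)⟫ * (ε ^ 2 * ⟪A (u ε), A (u ε)⟫) := by
          field_simp
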